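/- Let λ be a self-conjugate partition of length ℓ with multirectangular heights (a_1,...,a_r). Then #{i ∈ [ℓ] : λ_i < ℓ - i + 1} = Σ_{j=2}^{r} max{0, min{a_{≥j} − a_{≤ r−j+1}, a_j}}, where a_{≤n} = a_1 + ... + a_n and a_{≥n} = a_n + ... + a_r. -/

import Mathlib

def cellMem (L : ℕ → ℕ) (i j : ℕ) : Prop := 1 ≤ i ∧ 1 ≤ j ∧ j ≤ L i

def IsPartitionOfLength (L : ℕ → ℕ) (l : ℕ) : Prop :=
  (∀ i j, 1 ≤ i → i ≤ j → L j ≤ L i) ∧ ∀ i, 1 ≤ i → (1 ≤ L i ↔ i ≤ l)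

def SelfConjugate (L : ℕ → ℕ) : Prop := ∀ i j, cellMem L i j ↔ cellMem L j i

/-- `#{i ∈ [ℓ] : λ_i < ℓ - i + 1} = Σ_{j=2}^r max{0, min{a_{≥j} − a_{≤ r−j+1}, a_j}}`. -/
theorem stmt14 (r : ℕ) (hr : 1 ≤ r) (a : ℕ → ℕ)
    (ha : ∀ n, 1 ≤ n → n ≤ r → 1 ≤ a n)
    (l : ℕ) (hl : l = ∑ m ∈ Finset.Icc 1 r, a m)
    (L : ℕ → ℕ)
    (hL : ∀ n i, 1 ≤ n → n ≤ r → (∑ m ∈ Finset.Icc 1 (n - 1), a m) < i →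
        i ≤ ∑ m ∈ Finset.Icc 1 n, a m → L i = ∑ m ∈ Finset.Icc 1 (r - n + 1), a m) :
    (((Finset.Icc 1 l).filter (fun i => L i < l - i + 1)).card : ℤ) =
      ∑ j ∈ Finset.Icc 2 r,
        max 0 (min ((∑ m ∈ Finset.Icc j r, (a m : ℤ)) - ∑ m ∈ Finset.Icc 1 (r - j + 1), (a m : ℤ))
          (a j : ℤ)) := by
  classical
  set A : ℕ → ℕ := fun n => ∑ m ∈ Finset.Icc 1 n, a m with hA
  have hA0 : A 0 = 0 := by simp [hA]
  have hAmono : ∀ m n, m ≤ n → A m ≤ A n := by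
    intro m n h
    exact Finset.sum_le_sum_of_subset (Finset.Icc_subset_Icc_right h)
  have hIoc : ∀ n : ℕ, Finset.Icc 1 n = Finset.Ioc 0 n := by
    intro n; rw [← Finset.Icc_add_one_left_eq_Ioc, zero_add]
  -- splitting sums
  have hsplit : ∀ j n : ℕ, 1 ≤ j → j ≤ n → A (j - 1) + ∑ m ∈ Finset.Icc j n, a m = A n := by
    intro j n h1 h2
    have h3 : Finset.Icc j n = Finset.Ioc (j - 1) n := by
      rw [← Finset.Icc_add_one_left_eq_Ioc]; congr 1; omega
    rw [hA, h3]
    simp only []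
    rw [hIoc, hIoc]
    exact Finset.sum_Ioc_consecutive _ (by omega) (by omega)
  -- cast of A
  have hAcast : ∀ n : ℕ, (A n : ℤ) = ∑ m ∈ Finset.Icc 1 n, (a m : ℤ) := by
    intro n; rw [hA]; push_cast; ring
  -- block decomposition
  have claim : ∀ n : ℕ,
      (Finset.Icc 1 n).biUnion (fun j => Finset.Ioc (A (j - 1)) (A j)) = Finset.Ioc 0 (A n) := by
    intro n
    induction n with
    | zero => simp [hA0]
    | succ k ih =>
      have h1 : Finset.Icc 1 (k + 1) = insert (k + 1) (Finset.Icc 1 k) := by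
        ext x; simp [Finset.mem_Icc, Finset.mem_insert]; omega
      rw [h1, Finset.biUnion_insert, ih]
      have h2 : (k + 1) - 1 = k := rfl
      rw [h2, Finset.union_comm, Finset.Ioc_union_Ioc_eq_Ioc (Nat.zero_le _) (hAmono k (k + 1) (by omega))]
  have hbi : Finset.Icc 1 l = (Finset.Icc 1 r).biUnion (fun j => Finset.Ioc (A (j - 1)) (A j)) := by
    rw [claim, hl, hIoc]
  -- per-block filter computation
  have hfilter : ∀ j, 1 ≤ j → j ≤ r →
      (Finset.Ioc (A (j - 1)) (A j)).filter (fun i => L i < l - i + 1)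
        = Finset.Ioc (A (j - 1)) (min (A j) (A r - A (r - j + 1))) := by
    intro j h1 h2
    have hlA : l = A r := hl
    ext i
    simp only [Finset.mem_filter, Finset.mem_Ioc, lt_min_iff, le_min_iff]
    constructor
    · rintro ⟨⟨h3, h4⟩, h5⟩
      have hLA : L i = A (r - j + 1) := hL j i h1 h2 h3 h4
      have hle1 : A (r - j + 1) ≤ A r := hAmono _ _ (by omega)
      have hle2 : A j ≤ A r := hAmono _ _ h2
      rw [hLA] at h5
      refine ⟨h3, h4, ?_⟩
      omega
    · rintro ⟨h3, h4, h6⟩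
      have hLA : L i = A (r - j + 1) := hL j i h1 h2 h3 h4
      have hle1 : A (r - j + 1) ≤ A r := hAmono _ _ (by omega)
      have hle2 : A j ≤ A r := hAmono _ _ h2
      refine ⟨⟨h3, h4⟩, ?_⟩
      rw [hLA]
      omega
  -- disjointness
  have hdisj : ∀ x ∈ Finset.Icc 1 r, ∀ y ∈ Finset.Icc 1 r, x ≠ y →
      Disjoint ((Finset.Ioc (A (x - 1)) (A x)).filter (fun i => L i < l - i + 1))
        ((Finset.Ioc (A (y - 1)) (A y)).filter (fun i => L i < l - i + 1)) := by
    have key : ∀ x y : ℕ, x < y →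
        Disjoint (Finset.Ioc (A (x - 1)) (A x)) (Finset.Ioc (A (y - 1)) (A y)) := by
      intro x y hxy
      rw [Finset.disjoint_left]
      intro i hi hi'
      simp only [Finset.mem_Ioc] at hi hi'
      have := hAmono x (y - 1) (by omega)
      omega
    intro x hx y hy hxy
    rcases lt_or_gt_of_ne hxy with h | h
    · exact Finset.disjoint_filter_filter (key x y h)
    · exact (Finset.disjoint_filter_filter (key y x h)).symm
  -- compute the cardinality
  rw [hbi, Finset.filter_biUnion, Finset.card_biUnion hdisj]
  have hcard : ∀ j ∈ Finset.Icc 1 r,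
      ((Finset.Ioc (A (j - 1)) (A j)).filter (fun i => L i < l - i + 1)).card
        = min (A j) (A r - A (r - j + 1)) - A (j - 1) := by
    intro j hj
    simp only [Finset.mem_Icc] at hj
    rw [hfilter j hj.1 hj.2, Nat.card_Ioc]
  rw [Finset.sum_congr rfl hcard]
  -- drop the j = 1 term
  have h1r : Finset.Icc 1 r = insert 1 (Finset.Icc 2 r) := by
    ext x; simp [Finset.mem_Icc, Finset.mem_insert]; omega
  rw [h1r, Finset.sum_insert (by simp)]
  have hterm1 : min (A 1) (A r - A (r - 1 + 1)) - A (1 - 1) = 0 := by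
    have : r - 1 + 1 = r := by omega
    rw [this, hA0]
    omega
  rw [hterm1]
  push_cast
  rw [zero_add]
  apply Finset.sum_congr rfl
  intro j hj
  simp only [Finset.mem_Icc] at hj
  have h1 : (1 : ℕ) ≤ j := by omega
  have hsum1 : (A (j - 1) : ℤ) + ∑ m ∈ Finset.Icc j r, (a m : ℤ) = (A r : ℤ) := by
    have := hsplit j r h1 hj.2
    have := congrArg (fun x : ℕ => (x : ℤ)) this
    push_cast at this
    linarith [this]
  have hsum2 : (∑ m ∈ Finset.Icc 1 (r - j + 1), (a m : ℤ)) = (A (r - j + 1) : ℤ) :=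
    (hAcast _).symm
  have hsum3 : (A (j - 1) : ℤ) + (a j : ℤ) = (A j : ℤ) := by
    have := hsplit j j h1 le_rfl
    rw [Finset.Icc_self, Finset.sum_singleton] at this
    exact_mod_cast this
  have hle1 : A (r - j + 1) ≤ A r := hAmono _ _ (by omega)
  have hle2 : A j ≤ A r := hAmono _ _ hj.2
  have hle3 : A (j - 1) ≤ A j := hAmono _ _ (by omega)
  omega
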